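/- Let S be a finite nonempty set and let 1_{Δ(S)} : S × S × S → 𝔽₃ be the indicator function of the diagonal Δ(S) = {(s, s, s) : s ∈ S}, so 1_{Δ(S)}(x, y, z) = 1 if x = y = z and 0 otherwise. Then the slice rank of 1_{Δ(S)} is exactly |S|. -/

import Mathlib

open Module Finset

/-- A function `f : S^k → 𝔽₃` has slice rank one if it is of the form
`f(x₁, ..., x_k) = g(x_i) · h(x₁, ..., x_{i−1}, x_{i+1}, ..., x_k)`. -/
def IsSliceRankOne {S : Type*} {k : ℕ} (f : (Fin k → S) → ZMod 3) : Prop :=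
  ∃ (i : Fin k) (g : S → ZMod 3) (h : ({j : Fin k // j ≠ i} → S) → ZMod 3),
    ∀ x, f x = g (x i) * h (fun j => x j.1)

/-- The slice rank of `f : S^k → 𝔽₃`: the least `m` such that `f` is a sum of `m`
functions of slice rank one. -/
noncomputable def sliceRank {S : Type*} {k : ℕ} (f : (Fin k → S) → ZMod 3) : ℕ :=
  sInf {m | ∃ fs : Fin m → ((Fin k → S) → ZMod 3),
    (∀ j, IsSliceRankOne (fs j)) ∧ f = ∑ j, fs j}

lemma exists_mem_finrank_le_card_support {K : Type*} [Field K] [DecidableEq K]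
    {ι : Type*} [Fintype ι] [DecidableEq ι] (V : Submodule K (ι → K)) :
    ∃ φ ∈ V, Module.finrank K V ≤ (Finset.univ.filter fun i => φ i ≠ 0).card := by
  classical
  set T : Set ℕ := {k | ∃ φ ∈ V, (Finset.univ.filter fun i => φ i ≠ 0).card = k} with hT
  have hne : T.Nonempty := ⟨_, 0, V.zero_mem, rfl⟩
  have hbdd : BddAbove T := by
    refine ⟨Fintype.card ι, fun k hk => ?_⟩
    obtain ⟨φ, -, rfl⟩ := hk
    exact (Finset.card_filter_le _ _).trans (by simp)
  obtain ⟨φ, hφV, hφcard⟩ := Nat.sSup_mem hne hbdd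
  refine ⟨φ, hφV, ?_⟩
  set A := (Finset.univ.filter fun i => φ i ≠ 0) with hA
  let r : (ι → K) →ₗ[K] ({i // i ∈ A} → K) := LinearMap.funLeft K K Subtype.val
  have hinj : Function.Injective (r.comp V.subtype) := by
    rw [← LinearMap.ker_eq_bot, LinearMap.ker_eq_bot']
    rintro ⟨ψ, hψV⟩ hψ
    have hψA : ∀ i ∈ A, ψ i = 0 := by
      intro i hi
      exact congrFun hψ ⟨i, hi⟩
    ext1
    by_contra hψ0
    have : ∃ s, ψ s ≠ 0 := by
      by_contra h
      push_neg at h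
      exact hψ0 (funext h)
    obtain ⟨s, hs⟩ := this
    have hsA : s ∉ A := fun h => hs (hψA s h)
    have hsub : insert s A ⊆ (Finset.univ.filter fun i => (φ + ψ) i ≠ 0) := by
      intro i hi
      rcases Finset.mem_insert.mp hi with rfl | hiA
      · have hφs : φ i = 0 := by
          by_contra h
          exact hsA (Finset.mem_filter.mpr ⟨Finset.mem_univ _, h⟩)
        simp [hφs, hs]
      · have h1 : φ i ≠ 0 := (Finset.mem_filter.mp hiA).2
        simp [hψA i hiA, h1]
    have h2 := Finset.card_insert_of_notMem hsA
    have h3 := Finset.card_le_card hsub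
    have hmem : (Finset.univ.filter fun i => (φ + ψ) i ≠ 0).card ∈ T :=
      ⟨φ + ψ, V.add_mem hφV hψV, rfl⟩
    have h4 := le_csSup hbdd hmem
    omega
  have := LinearMap.finrank_le_finrank_of_injective hinj
  simpa [Module.finrank_pi, Fintype.card_coe] using this

lemma myrank_add_le {K : Type*} [Field K] {m n : Type*} [Fintype n] [Fintype m]
    (A B : Matrix m n K) : (A + B).rank ≤ A.rank + B.rank := by
  rw [Matrix.rank, Matrix.mulVecLin_add]
  refine le_trans (Submodule.finrank_mono ?_ : finrank K _ ≤
    finrank K ↥(LinearMap.range A.mulVecLin ⊔ LinearMap.range B.mulVecLin)) ?_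
  · rintro x ⟨v, rfl⟩
    exact Submodule.mem_sup.mpr ⟨A.mulVecLin v, ⟨v, rfl⟩, B.mulVecLin v, ⟨v, rfl⟩, rfl⟩
  · exact Submodule.finrank_add_le_finrank_add_finrank _ _

lemma myrank_sum_le {K : Type*} [Field K] {m n : Type*} [Fintype n] [Fintype m]
    {ι : Type*} (s : Finset ι) (M : ι → Matrix m n K) :
    (∑ j ∈ s, M j).rank ≤ ∑ j ∈ s, (M j).rank := by
  classical
  induction s using Finset.induction with
  | empty => simp
  | insert _ _ hj ih =>
    rw [Finset.sum_insert hj, Finset.sum_insert hj]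
    exact le_trans (myrank_add_le _ _) (add_le_add_right ih _)

lemma myrank_vecMulVec_le {K : Type*} [Field K] {m n : Type*} [Fintype n] [Fintype m]
    (u : m → K) (v : n → K) : (Matrix.vecMulVec u v).rank ≤ 1 := by
  rw [Matrix.vecMulVec_eq Unit]
  refine le_trans (Matrix.rank_mul_le_left _ _) ?_
  simpa using Matrix.rank_le_card_width (Matrix.replicateCol Unit u)

lemma fin3_cases : ∀ v : Fin 3, v = 0 ∨ v = 1 ∨ v = 2 := by decide

lemma lower_bound {S : Type*} [Fintype S] [DecidableEq S] (m : ℕ)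
    (fs : Fin m → ((Fin 3 → S) → ZMod 3)) (hone : ∀ j, IsSliceRankOne (fs j))
    (hsum : (fun x : Fin 3 → S => if x 0 = x 1 ∧ x 1 = x 2 then 1 else 0) = ∑ j, fs j) :
    Fintype.card S ≤ m := by
  classical
  choose i g h hd using hone
  set C : Finset (Fin m) := Finset.univ.filter (fun j => i j = 2) with hC
  let Ψ : (S → ZMod 3) →ₗ[ZMod 3] ({j // j ∈ C} → ZMod 3) :=
    LinearMap.pi (fun j => ∑ z : S, g j.1 z • LinearMap.proj z)
  have hΨ : ∀ φ (j : {j // j ∈ C}), Ψ φ j = ∑ z : S, g j.1 z * φ z := by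
    intro φ j
    simp [Ψ, LinearMap.pi_apply, smul_eq_mul]
  have hker : Fintype.card S ≤ C.card + finrank (ZMod 3) (LinearMap.ker Ψ) := by
    have h1 := LinearMap.finrank_range_add_finrank_ker Ψ
    have h2 : finrank (ZMod 3) (LinearMap.range Ψ) ≤ C.card := by
      have := (LinearMap.range Ψ).finrank_le
      simpa [Module.finrank_pi, Fintype.card_coe] using this
    have h3 : finrank (ZMod 3) (S → ZMod 3) = Fintype.card S := by
      simp [Module.finrank_pi]
    omega
  obtain ⟨φ, hφker, hφ⟩ := exists_mem_finrank_le_card_support (LinearMap.ker Ψ)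
  have hφ0 : ∀ j (hj : j ∈ C), ∑ z : S, g j z * φ z = 0 := by
    intro j hj
    have h0 := congrFun (LinearMap.mem_ker.mp hφker) ⟨j, hj⟩
    exact (hΨ φ ⟨j, hj⟩).symm.trans h0
  let M : Fin m → Matrix S S (ZMod 3) :=
    fun j => Matrix.of fun x y => ∑ z : S, fs j ![x, y, z] * φ z
  have hdiag : Matrix.diagonal φ = ∑ j, M j := by
    ext x y
    have e1 : (∑ j, M j) x y = ∑ j, ∑ z : S, fs j ![x, y, z] * φ z := by
      simp [M, Matrix.sum_apply]
    rw [e1, Finset.sum_comm]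
    have e2 : ∀ z : S, ∑ j, fs j ![x, y, z] * φ z
        = (if x = y ∧ y = z then 1 else 0) * φ z := by
      intro z
      rw [← Finset.sum_mul]
      congr 1
      convert (congrFun hsum ![x, y, z]).symm using 1 <;> simp [Finset.sum_apply] <;> congr
    rw [Finset.sum_congr rfl fun z _ => e2 z]
    by_cases hxy : x = y
    · subst hxy
      simp [Matrix.diagonal_apply_eq, ite_mul, Finset.sum_ite_eq]
    · simp [Matrix.diagonal_apply_ne _ hxy, hxy]
  have hM : ∀ j, (M j).rank ≤ if j ∈ C then 0 else 1 := by
    intro j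
    rcases fin3_cases (i j) with hij | hij | hij
    · have hjC : j ∉ C := by simp [hC, hij]
      rw [if_neg hjC]
      have hMj : M j = Matrix.vecMulVec (fun x => g j x)
          (fun y => ∑ z : S, h j (fun p => ![y, y, z] p.1) * φ z) := by
        ext x y
        rw [Matrix.vecMulVec_apply, Finset.mul_sum]
        refine Finset.sum_congr rfl fun z _ => ?_
        have e_g : (![x, y, z] : Fin 3 → S) (i j) = x := by rw [hij]; rfl
        have e_h : (fun p : {p : Fin 3 // p ≠ i j} => (![x, y, z] : Fin 3 → S) p.1)
            = (fun p => (![y, y, z] : Fin 3 → S) p.1) := by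
          funext p
          obtain ⟨p, hp⟩ := p
          rw [hij] at hp
          rcases fin3_cases p with rfl | rfl | rfl
          · exact absurd rfl hp
          · rfl
          · rfl
        show fs j ![x, y, z] * φ z = _
        rw [hd j, e_g, e_h]
        ring
      rw [hMj]
      exact myrank_vecMulVec_le _ _
    · have hjC : j ∉ C := by simp [hC, hij]
      rw [if_neg hjC]
      have hMj : M j = Matrix.vecMulVec
          (fun x => ∑ z : S, h j (fun p => ![x, x, z] p.1) * φ z) (fun y => g j y) := by
        ext x y
        rw [Matrix.vecMulVec_apply, Finset.sum_mul]
        refine Finset.sum_congr rfl fun z _ => ?_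
        have e_g : (![x, y, z] : Fin 3 → S) (i j) = y := by rw [hij]; rfl
        have e_h : (fun p : {p : Fin 3 // p ≠ i j} => (![x, y, z] : Fin 3 → S) p.1)
            = (fun p => (![x, x, z] : Fin 3 → S) p.1) := by
          funext p
          obtain ⟨p, hp⟩ := p
          rw [hij] at hp
          rcases fin3_cases p with rfl | rfl | rfl
          · rfl
          · exact absurd rfl hp
          · rfl
        show fs j ![x, y, z] * φ z = _
        rw [hd j, e_g, e_h]
        ring
      rw [hMj]
      exact myrank_vecMulVec_le _ _
    · have hjC : j ∈ C := by simp [hC, hij]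
      rw [if_pos hjC]
      have hMj : M j = 0 := by
        ext x y
        show (∑ z : S, fs j ![x, y, z] * φ z) = 0
        have step : ∀ z : S, fs j ![x, y, z] * φ z
            = h j (fun p => (![x, y, x] : Fin 3 → S) p.1) * (g j z * φ z) := by
          intro z
          have e_g : (![x, y, z] : Fin 3 → S) (i j) = z := by rw [hij]; rfl
          have e_h : (fun p : {p : Fin 3 // p ≠ i j} => (![x, y, z] : Fin 3 → S) p.1)
              = (fun p => (![x, y, x] : Fin 3 → S) p.1) := by
            funext p
            obtain ⟨p, hp⟩ := p
            rw [hij] at hp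
            rcases fin3_cases p with rfl | rfl | rfl
            · rfl
            · rfl
            · exact absurd rfl hp
          rw [hd j, e_g, e_h]
          ring
        rw [Finset.sum_congr rfl fun z _ => step z, ← Finset.mul_sum, hφ0 j hjC, mul_zero]
      rw [hMj, Matrix.rank_zero]
  have hr1 : (∑ j, M j).rank = (Finset.univ.filter fun s => φ s ≠ 0).card := by
    rw [← hdiag, Matrix.rank_diagonal, Fintype.card_subtype]
  have hr2 := myrank_sum_le Finset.univ M
  have hr3 : ∑ j, (M j).rank ≤ ∑ j : Fin m, (if j ∈ C then 0 else 1) :=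
    Finset.sum_le_sum fun j _ => hM j
  have hr4 : ∑ j : Fin m, (if j ∈ C then 0 else 1)
      = (Finset.univ.filter (fun j => j ∉ C)).card := by
    rw [Finset.card_filter]
    exact Finset.sum_congr rfl fun j _ => by by_cases hj : j ∈ C <;> simp [hj]
  have hr5 : (Finset.univ.filter (fun j => j ∈ C)).card
      + (Finset.univ.filter (fun j => j ∉ C)).card = m := by
    have := Finset.card_filter_add_card_filter_not
      (s := (Finset.univ : Finset (Fin m))) (p := fun j => j ∈ C)
    simpa using this
  have hr6 : C.card = (Finset.univ.filter (fun j => j ∈ C)).card := by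
    simp
  omega

lemma upper_bound {S : Type*} [Fintype S] [DecidableEq S] :
    ∃ fs : Fin (Fintype.card S) → ((Fin 3 → S) → ZMod 3),
      (∀ j, IsSliceRankOne (fs j)) ∧
      (fun x : Fin 3 → S => if x 0 = x 1 ∧ x 1 = x 2 then 1 else 0) = ∑ j, fs j := by
  classical
  let e := (Fintype.equivFin S).symm
  refine ⟨fun j x => (if x 0 = e j then 1 else 0) *
    (if x 1 = e j ∧ x 2 = e j then 1 else 0), fun j => ?_, ?_⟩
  · exact ⟨0, fun s => if s = e j then 1 else 0,
      fun y => if y ⟨1, by decide⟩ = e j ∧ y ⟨2, by decide⟩ = e j then 1 else 0,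
      fun x => rfl⟩
  · funext x
    rw [Finset.sum_apply]
    rw [e.sum_comp (fun s => (if x 0 = s then (1 : ZMod 3) else 0) *
      (if x 1 = s ∧ x 2 = s then 1 else 0))]
    have e2 : ∀ s : S, (if x 0 = s then (1 : ZMod 3) else 0) *
        (if x 1 = s ∧ x 2 = s then 1 else 0)
        = if s = x 0 ∧ x 1 = x 0 ∧ x 2 = x 0 then 1 else 0 := by
      intro s
      split_ifs with h1 h2 h3 h3 h2 <;> first
        | rfl
        | (exfalso; simp_all; try tauto)
    rw [Finset.sum_congr rfl fun s _ => e2 s]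
    by_cases hx : x 0 = x 1 ∧ x 1 = x 2
    · have hx1 : x 1 = x 0 := hx.1.symm
      have hx2 : x 2 = x 0 := (hx.1.trans hx.2).symm
      rw [if_pos hx]
      have e3 : ∀ s : S, (if s = x 0 ∧ x 1 = x 0 ∧ x 2 = x 0 then (1 : ZMod 3) else 0)
          = if s = x 0 then 1 else 0 := fun s => by simp [hx1, hx2]
      rw [Finset.sum_congr rfl fun s _ => e3 s,
        Finset.sum_ite_eq' Finset.univ (x 0) (fun _ => (1 : ZMod 3))]
      simp
    · rw [if_neg hx, Finset.sum_eq_zero]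
      intro s _
      rw [if_neg]
      rintro ⟨rfl, h1, h2⟩
      exact hx ⟨h1.symm, h1.trans h2.symm⟩

/-- For a finite nonempty set `S`, the slice rank of the indicator function of the
diagonal of `S × S × S` is exactly `|S|`. -/
theorem sliceRank_diagonal (S : Type*) [Fintype S] [Nonempty S] [DecidableEq S] :
    sliceRank (fun x : Fin 3 → S => if x 0 = x 1 ∧ x 1 = x 2 then 1 else 0) =
      Fintype.card S := by
  obtain ⟨fs, h1, h2⟩ := upper_bound (S := S)
  have hmem : Fintype.card S ∈ {m | ∃ fs : Fin m → ((Fin 3 → S) → ZMod 3),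
      (∀ j, IsSliceRankOne (fs j)) ∧
      (fun x : Fin 3 → S => if x 0 = x 1 ∧ x 1 = x 2 then 1 else 0) = ∑ j, fs j} :=
    ⟨fs, h1, h2⟩
  refine le_antisymm (Nat.sInf_le hmem) ?_
  refine le_csInf ⟨_, hmem⟩ ?_
  rintro m ⟨gs, hg1, hg2⟩
  exact lower_bound m gs hg1 hg2
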